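/- Let (g, Ω) be a symplectic Lie algebra and h an ideal of g that is isotropic for Ω. Then h ⊆ h^⊥, the orthogonal complement h^⊥ is a Lie subalgebra containing h as an ideal, and Ω descends to a well-defined nondegenerate closed 2-form on the quotient Lie algebra h^⊥/h. -/

import Mathlib

/-- For an isotropic ideal `h` of a symplectic Lie algebra `(g,Ω)`: `h ⊆ h^⊥`, `h^⊥` is a
subalgebra containing `h` as an ideal, and `Ω` descends to a well-defined nondegenerate
closed 2-form on the quotient `h^⊥/h`. -/
theorem symplectic_reduction
    {g : Type*} [LieRing g] [LieAlgebra ℝ g] [Module.Finite ℝ g]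
    (Ω : g →ₗ[ℝ] g →ₗ[ℝ] ℝ)
    (halt : ∀ x : g, Ω x x = 0)
    (hnondeg : ∀ x : g, (∀ y : g, Ω x y = 0) → x = 0)
    (hclosed : ∀ x y z : g, Ω ⁅x, y⁆ z + Ω ⁅y, z⁆ x + Ω ⁅z, x⁆ y = 0)
    (h : LieIdeal ℝ g)
    (hiso : ∀ x ∈ h, ∀ y ∈ h, Ω x y = 0) :
    -- h ⊆ h^⊥
    (∀ x ∈ h, ∀ y ∈ h, Ω x y = 0) ∧
    -- h^⊥ is a Lie subalgebra
    (∀ x y : g, (∀ z ∈ h, Ω x z = 0) → (∀ z ∈ h, Ω y z = 0) →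
      ∀ z ∈ h, Ω ⁅x, y⁆ z = 0) ∧
    -- h is an ideal of h^⊥
    (∀ x : g, (∀ z ∈ h, Ω x z = 0) → ∀ y ∈ h, ⁅x, y⁆ ∈ h) ∧
    -- the induced form on h^⊥/h is well defined
    (∀ x x' y y' : g, (∀ z ∈ h, Ω x z = 0) → (∀ z ∈ h, Ω x' z = 0) →
      (∀ z ∈ h, Ω y z = 0) → (∀ z ∈ h, Ω y' z = 0) →
      x - x' ∈ h → y - y' ∈ h → Ω x y = Ω x' y') ∧
    -- the induced form is nondegenerate on the quotient
    (∀ x : g, (∀ z ∈ h, Ω x z = 0) →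
      (∀ y : g, (∀ z ∈ h, Ω y z = 0) → Ω x y = 0) → x ∈ h) ∧
    -- the induced form is closed
    (∀ x y z : g, (∀ w ∈ h, Ω x w = 0) → (∀ w ∈ h, Ω y w = 0) → (∀ w ∈ h, Ω z w = 0) →
      Ω ⁅x, y⁆ z + Ω ⁅y, z⁆ x + Ω ⁅z, x⁆ y = 0) := by
  have hskew : ∀ x y : g, Ω x y = -Ω y x := by
    intro x y
    have := halt (x + y)
    simp only [map_add, LinearMap.add_apply, halt] at this
    linarith
  refine ⟨hiso, ?_, ?_, ?_, ?_, fun x y z _ _ _ => hclosed x y z⟩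
  · -- subalgebra
    intro x y hx hy z hz
    have h1 : Ω ⁅y, z⁆ x = 0 := by
      simp only [hskew x, neg_eq_zero] at *
      exact hx _ (h.lie_mem hz)
    have h2 : Ω ⁅z, x⁆ y = 0 := by
      rw [hskew, ← lie_skew z x, map_neg]
      simp [hy _ (h.lie_mem hz)]
    have := hclosed x y z
    linarith
  · -- h ideal of h^⊥
    intro x _ y hy
    have : ⁅x, y⁆ ∈ h := h.lie_mem hy
    exact this
  · -- well-defined
    intro x x' y y' hx hx' hy _ hxx' hyy'
    have e1 : Ω x y - Ω x' y = Ω (x - x') y := by simp [map_sub]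
    have e2 : Ω x' y - Ω x' y' = Ω x' (y - y') := by simp [map_sub]
    have h1 : Ω (x - x') y = 0 := by
      rw [hskew]; rw [hy _ hxx']; ring
    have h2 : Ω x' (y - y') = 0 := hx' _ hyy'
    linarith
  · -- nondegeneracy on quotient
    intro x hx hx'
    set B : LinearMap.BilinForm ℝ g := Ω with hB
    have hrefl : B.IsRefl := by
      intro a b hab
      rw [hskew] at hab; linarith [hab]
    have hnd : B.Nondegenerate := hrefl.nondegenerate_iff_separatingLeft.mpr hnondeg
    haveI : FiniteDimensional ℝ g := inferInstance
    have key := B.orthogonal_orthogonal hnd hrefl (h : Submodule ℝ g)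
    have hmem : x ∈ B.orthogonal (B.orthogonal (h : Submodule ℝ g)) := by
      intro n hn
      have hn' : ∀ z ∈ h, Ω n z = 0 := by
        intro z hz
        have := hn z hz
        rw [hskew]; rw [this]; ring
      have := hx' n hn'
      show B n x = 0
      rw [hskew]; rw [this]; ring
    rw [key] at hmem
    exact hmem
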